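/- For a monotone submodular function f with f(∅) = 0 on a ground set V, if S1 is a set obtained by cost-benefit greedy under a knapsack constraint Σ_{k∈S} s_k ≤ C and S2 is the output of the uniform (cardinality-style) greedy under the same knapsack budget, then max(f(S1), f(S2)) ≥ ½(1 - 1/e) · max{ f(S) : Σ_{k∈S} s_k ≤ C }. -/

import Mathlib

open Finset

section Helpers

variable {V : Type*} [Fintype V] [DecidableEq V]

/-- Structural shape of a greedy run (either run). -/
def GreedyShape (s : V → ℝ) (C : ℝ) (S R : ℕ → Finset V) : Prop :=
  S 0 = ∅ ∧ R 0 = Finset.univ ∧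
  (∀ t, (R t).Nonempty → ∃ x ∈ R t, R (t + 1) = (R t).erase x ∧
      S (t + 1) = if (∑ k ∈ S t, s k) + s x ≤ C then insert x (S t) else S t) ∧
  (∀ t, R t = ∅ → S (t + 1) = S t ∧ R (t + 1) = ∅)

variable {s : V → ℝ} {C : ℝ} {S R : ℕ → Finset V}

lemma GreedyShape.S_subset (h : GreedyShape s C S R) (t : ℕ) : S t ⊆ S (t + 1) := by
  rcases (R t).eq_empty_or_nonempty with he | hne
  · rw [(h.2.2.2 t he).1]
  · obtain ⟨x, -, -, hS⟩ := h.2.2.1 t hne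
    rw [hS]; split
    · exact subset_insert _ _
    · rfl

lemma GreedyShape.S_mono (h : GreedyShape s C S R) {t t' : ℕ} (htt : t ≤ t') :
    S t ⊆ S t' := by
  induction t' with
  | zero => simpa [Nat.le_zero.mp htt] using Finset.Subset.refl _
  | succ n ih =>
    rcases Nat.lt_or_ge t (n+1) with hlt | hge
    · exact (ih (Nat.lt_succ_iff.mp hlt)).trans (h.S_subset n)
    · have : t = n + 1 := le_antisymm htt hge
      subst this; rfl

lemma GreedyShape.R_subset (h : GreedyShape s C S R) (t : ℕ) : R (t + 1) ⊆ R t := by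
  rcases (R t).eq_empty_or_nonempty with he | hne
  · rw [(h.2.2.2 t he).2, he]
  · obtain ⟨x, -, hR, -⟩ := h.2.2.1 t hne
    rw [hR]; exact erase_subset _ _

lemma GreedyShape.R_anti (h : GreedyShape s C S R) {t t' : ℕ} (htt : t ≤ t') :
    R t' ⊆ R t := by
  induction t' with
  | zero => simpa [Nat.le_zero.mp htt] using Finset.Subset.refl _
  | succ n ih =>
    rcases Nat.lt_or_ge t (n+1) with hlt | hge
    · exact (h.R_subset n).trans (ih (Nat.lt_succ_iff.mp hlt))
    · have : t = n + 1 := le_antisymm htt hge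
      subst this; rfl

lemma GreedyShape.disjoint (h : GreedyShape s C S R) (t : ℕ) :
    ∀ v ∈ S t, v ∉ R t := by
  induction t with
  | zero => intro v hv; rw [h.1] at hv; exact absurd hv (notMem_empty v)
  | succ n ih =>
    rcases (R n).eq_empty_or_nonempty with he | hne
    · intro v hv; rw [(h.2.2.2 n he).2]; exact notMem_empty v
    · obtain ⟨x, hx, hR, hS⟩ := h.2.2.1 n hne
      intro v hv
      rw [hR]
      rw [hS] at hv
      intro hvR
      have hvRn : v ∈ R n := mem_of_mem_erase hvR
      have hvx : v ≠ x := ne_of_mem_erase hvR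
      split at hv
      · rcases mem_insert.mp hv with h1 | h2
        · exact hvx h1
        · exact ih v h2 hvRn
      · exact ih v hv hvRn

lemma GreedyShape.R_card (h : GreedyShape s C S R) (t : ℕ) :
    (R t).card ≤ Fintype.card V - t := by
  induction t with
  | zero => rw [h.2.1]; simp
  | succ n ih =>
    rcases (R n).eq_empty_or_nonempty with he | hne
    · rw [(h.2.2.2 n he).2]; simp
    · obtain ⟨x, hx, hR, -⟩ := h.2.2.1 n hne
      rw [hR, card_erase_of_mem hx]
      omega

lemma GreedyShape.R_final (h : GreedyShape s C S R) : R (Fintype.card V) = ∅ := by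
  have := h.R_card (Fintype.card V)
  simpa [Finset.card_eq_zero] using Nat.le_zero.mp (by omega : (R (Fintype.card V)).card ≤ 0)

lemma GreedyShape.budget (h : GreedyShape s C S R) (hs : ∀ k, 0 < s k) (hC : 0 < C)
    (t : ℕ) : (∑ k ∈ S t, s k) ≤ C := by
  induction t with
  | zero => rw [h.1]; simpa using hC.le
  | succ n ih =>
    rcases (R n).eq_empty_or_nonempty with he | hne
    · rw [(h.2.2.2 n he).1]; exact ih
    · obtain ⟨x, hx, -, hS⟩ := h.2.2.1 n hne
      rw [hS]; split
      · next hcond =>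
        have hxS : x ∉ S n := fun hxs => h.disjoint n x hxs hx
        rw [Finset.sum_insert hxS]
        linarith
      · exact ih

/-- Submodular telescoping bound. -/
lemma telescope_bound (f : Finset V → ℝ)
    (hmono : ∀ A B : Finset V, A ⊆ B → f A ≤ f B)
    (hsub : ∀ A B : Finset V, A ⊆ B → ∀ x ∉ B,
      f (insert x B) - f B ≤ f (insert x A) - f A) :
    ∀ (B A : Finset V), f (A ∪ B) ≤ f A + ∑ k ∈ B \ A, (f (insert k A) - f A) := by
  intro B
  induction B using Finset.induction with
  | empty => intro A; simp
  | insert b B' hb ih =>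
    next =>
    intro A
    by_cases hbA : b ∈ A
    · have h1 : A ∪ insert b B' = A ∪ B' := by
        rw [Finset.union_insert, Finset.insert_eq_self.mpr (mem_union_left _ hbA)]
      have h2 : insert b B' \ A = B' \ A := by
        rw [Finset.insert_sdiff_of_mem _ hbA]
      rw [h1, h2]; exact ih A
    · have h1 : A ∪ insert b B' = insert b (A ∪ B') := by
        rw [Finset.union_insert]
      have h2 : insert b B' \ A = insert b (B' \ A) := by
        rw [Finset.insert_sdiff_of_notMem _ hbA]
      have hbB' : b ∉ B' \ A := fun hmem => hb (mem_sdiff.mp hmem).1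
      rw [h1, h2, Finset.sum_insert hbB']
      by_cases hbAB : b ∈ A ∪ B'
      · have : insert b (A ∪ B') = A ∪ B' := Finset.insert_eq_self.mpr hbAB
        rw [this]
        have := ih A
        have hnn : 0 ≤ f (insert b A) - f A :=
          sub_nonneg.mpr (hmono A (insert b A) (subset_insert _ _))
        linarith
      · have key := hsub A (A ∪ B') Finset.subset_union_left b hbAB
        have := ih A
        linarith

end Helpers

section Uniform
variable {V : Type*} [Fintype V] [DecidableEq V]

lemma uniform_singleton (f : Finset V → ℝ) (s : V → ℝ) (C : ℝ)
    (hempty : f ∅ = 0)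
    (hmono : ∀ A B : Finset V, A ⊆ B → f A ≤ f B)
    (S2 R2 : ℕ → Finset V)
    (hstep2 : ∀ t, (R2 t).Nonempty → ∃ x ∈ R2 t,
      (∀ y ∈ R2 t, f (insert y (S2 t)) - f (S2 t)
          ≤ f (insert x (S2 t)) - f (S2 t)) ∧
      R2 (t + 1) = (R2 t).erase x ∧
      S2 (t + 1) = if (∑ k ∈ S2 t, s k) + s x ≤ C then insert x (S2 t) else S2 t)
    (h : GreedyShape s C S2 R2)
    (y : V) (hy : s y ≤ C) : f {y} ≤ f (S2 (Fintype.card V)) := by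
  classical
  set n := Fintype.card V with hn
  have hQn : ¬ (S2 n = ∅ ∧ y ∈ R2 n) := by
    rw [h.R_final]
    simp
  have hex : ∃ t, ¬ (S2 t = ∅ ∧ y ∈ R2 t) := ⟨n, hQn⟩
  have hm : ¬ (S2 (Nat.find hex) = ∅ ∧ y ∈ R2 (Nat.find hex)) := Nat.find_spec hex
  have hmn : Nat.find hex ≤ n := Nat.find_min' hex hQn
  have hm0 : Nat.find hex ≠ 0 := by
    intro h0
    rw [h0] at hm
    exact hm ⟨h.1, h.2.1 ▸ mem_univ y⟩
  obtain ⟨τ, hmeq⟩ : ∃ τ, Nat.find hex = τ + 1 :=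
    ⟨Nat.find hex - 1, (Nat.succ_pred_eq_of_ne_zero hm0).symm⟩
  rw [hmeq] at hm hmn
  have hQτ : S2 τ = ∅ ∧ y ∈ R2 τ := by
    by_contra hcon
    exact Nat.find_min hex (by omega : τ < Nat.find hex) hcon
  obtain ⟨hSτ, hyRτ⟩ := hQτ
  obtain ⟨x, hx, hmax, hR, hS⟩ := hstep2 τ ⟨y, hyRτ⟩
  have hfx : f {y} ≤ f (S2 (τ + 1)) := by
    rw [hS]
    split
    · -- accepted
      have := hmax y hyRτ
      rw [hSτ] at this ⊢
      simpa [hempty] using this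
    · next hcond =>
      -- rejected: then S2 (τ+1) = S2 τ = ∅ and y ∉ R2 (τ+1), forcing y = x
      exfalso
      have hS2m : S2 (τ + 1) = S2 τ := by rw [hS]; simp [if_neg hcond]
      have hyR : y ∉ R2 (τ + 1) := by
        intro hyR
        exact hm ⟨hS2m.trans hSτ, hyR⟩
      have hyx : y = x := by
        by_contra hne
        exact hyR (hR ▸ mem_erase.mpr ⟨hne, hyRτ⟩)
      rw [hyx] at hy
      rw [hSτ] at hcond
      simp at hcond
      linarith
  exact hfx.trans (hmono _ _ (h.S_mono (by omega : τ + 1 ≤ n)))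

end Uniform

section Gain
variable {V : Type*} [Fintype V] [DecidableEq V]

lemma gain_lower (f : Finset V → ℝ) (s : V → ℝ) (C : ℝ)
    (hmono : ∀ A B : Finset V, A ⊆ B → f A ≤ f B)
    (hsub : ∀ A B : Finset V, A ⊆ B → ∀ x ∉ B,
      f (insert x B) - f B ≤ f (insert x A) - f A)
    (hs : ∀ k, 0 < s k)
    (T A Rt : Finset V) (hT : ∑ k ∈ T, s k ≤ C)
    (hTR : ∀ k ∈ T, k ∉ A → k ∈ Rt)
    (x : V)
    (hmax : ∀ y ∈ Rt, (f (insert y A) - f A) / s y ≤ (f (insert x A) - f A) / s x) :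
    f T - f A ≤ C * ((f (insert x A) - f A) / s x) := by
  set g := f (insert x A) - f A with hg
  have hgnn : 0 ≤ g := sub_nonneg.mpr (hmono A (insert x A) (subset_insert _ _))
  have hgs : 0 ≤ g / s x := div_nonneg hgnn (hs x).le
  have h1 : f T ≤ f (A ∪ T) := hmono _ _ subset_union_right
  have h2 : f (A ∪ T) ≤ f A + ∑ k ∈ T \ A, (f (insert k A) - f A) :=
    telescope_bound f hmono hsub T A
  have h3 : ∑ k ∈ T \ A, (f (insert k A) - f A) ≤ ∑ k ∈ T \ A, s k * (g / s x) := by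
    apply Finset.sum_le_sum
    intro k hk
    have hkR : k ∈ Rt := hTR k (mem_sdiff.mp hk).1 (mem_sdiff.mp hk).2
    have := hmax k hkR
    rw [div_le_iff₀ (hs k)] at this
    calc f (insert k A) - f A ≤ g / s x * s k := this
      _ = s k * (g / s x) := mul_comm _ _
  have h4 : ∑ k ∈ T \ A, s k * (g / s x) = (∑ k ∈ T \ A, s k) * (g / s x) :=
    (Finset.sum_mul _ _ _).symm
  have h5 : (∑ k ∈ T \ A, s k) ≤ C := by
    refine le_trans ?_ hT
    exact Finset.sum_le_sum_of_subset_of_nonneg sdiff_subset (fun i _ _ => (hs i).le)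
  have h6 : (∑ k ∈ T \ A, s k) * (g / s x) ≤ C * (g / s x) :=
    mul_le_mul_of_nonneg_right h5 hgs
  linarith

end Gain


/-- Knapsack-constrained greedy bound (Leskovec et al.): for a monotone submodular `f`
with `f(∅)=0`, item sizes `s_k > 0` and budget `C`, run two greedy procedures over all
`Fintype.card V` candidate rounds, each time removing the current argmax candidate and
adding it to the selection only if it fits in the remaining budget:
`S1` is cost-benefit greedy (argmax of marginal gain divided by size) and `S2` is the
uniform greedy (argmax of raw marginal gain). Then
`max(f(S1), f(S2)) ≥ ½ (1 - 1/e) · max{ f(T) : Σ_{k∈T} s_k ≤ C }`. -/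
theorem knapsack_double_greedy_approx
    {V : Type*} [Fintype V] [DecidableEq V]
    (f : Finset V → ℝ) (s : V → ℝ) (C : ℝ)
    (hempty : f ∅ = 0)
    (hmono : ∀ A B : Finset V, A ⊆ B → f A ≤ f B)
    (hsub : ∀ A B : Finset V, A ⊆ B → ∀ x ∉ B,
      f (insert x B) - f B ≤ f (insert x A) - f A)
    (hs : ∀ k, 0 < s k) (hC : 0 < C)
    -- cost-benefit greedy run
    (S1 R1 : ℕ → Finset V)
    (hS10 : S1 0 = ∅) (hR10 : R1 0 = Finset.univ)
    (hstep1 : ∀ t, (R1 t).Nonempty → ∃ x ∈ R1 t,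
      (∀ y ∈ R1 t, (f (insert y (S1 t)) - f (S1 t)) / s y
          ≤ (f (insert x (S1 t)) - f (S1 t)) / s x) ∧
      R1 (t + 1) = (R1 t).erase x ∧
      S1 (t + 1) = if (∑ k ∈ S1 t, s k) + s x ≤ C then insert x (S1 t) else S1 t)
    (hend1 : ∀ t, R1 t = ∅ → S1 (t + 1) = S1 t ∧ R1 (t + 1) = ∅)
    -- uniform greedy run
    (S2 R2 : ℕ → Finset V)
    (hS20 : S2 0 = ∅) (hR20 : R2 0 = Finset.univ)
    (hstep2 : ∀ t, (R2 t).Nonempty → ∃ x ∈ R2 t,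
      (∀ y ∈ R2 t, f (insert y (S2 t)) - f (S2 t)
          ≤ f (insert x (S2 t)) - f (S2 t)) ∧
      R2 (t + 1) = (R2 t).erase x ∧
      S2 (t + 1) = if (∑ k ∈ S2 t, s k) + s x ≤ C then insert x (S2 t) else S2 t)
    (hend2 : ∀ t, R2 t = ∅ → S2 (t + 1) = S2 t ∧ R2 (t + 1) = ∅) :
    ∀ T : Finset V, (∑ k ∈ T, s k) ≤ C →
      (1 / 2) * (1 - 1 / Real.exp 1) * f T
        ≤ max (f (S1 (Fintype.card V))) (f (S2 (Fintype.card V))) := by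
  classical
  intro T hT
  have h1 : GreedyShape s C S1 R1 := by
    refine ⟨hS10, hR10, fun t ht => ?_, hend1⟩
    obtain ⟨x, hx, -, hR, hS⟩ := hstep1 t ht
    exact ⟨x, hx, hR, hS⟩
  have h2 : GreedyShape s C S2 R2 := by
    refine ⟨hS20, hR20, fun t ht => ?_, hend2⟩
    obtain ⟨x, hx, -, hR, hS⟩ := hstep2 t ht
    exact ⟨x, hx, hR, hS⟩
  set n := Fintype.card V with hn
  have hfnn : ∀ A : Finset V, 0 ≤ f A := fun A => hempty ▸ hmono ∅ A (empty_subset A)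
  have hTnn : 0 ≤ f T := hfnn T
  have hexp1 : 0 < Real.exp 1 := Real.exp_pos 1
  have hcoef : (1 : ℝ) / 2 * (1 - 1 / Real.exp 1) ≤ 1 := by
    have h1e : 0 < 1 / Real.exp 1 := by positivity
    linarith
  have hcoefnn : (0 : ℝ) ≤ 1 / 2 * (1 - 1 / Real.exp 1) := by
    have : 1 / Real.exp 1 ≤ 1 := by
      rw [div_le_one hexp1]
      have := Real.add_one_le_exp 0
      simpa using Real.one_le_exp (by norm_num)
    linarith [(by positivity : (0:ℝ) < 1 / Real.exp 1)]
  -- easy out if max dominates f T directly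
  by_cases hex : ∃ t, ∃ k ∈ T, k ∉ S1 t ∧ k ∉ R1 t
  case neg =>
    -- no element of T ever rejected by run 1 ⇒ T ⊆ S1 n
    push_neg at hex
    have hTS : T ⊆ S1 n := by
      intro k hk
      by_contra hkS
      have hkR := hex n k hk hkS
      rw [h1.R_final] at hkR
      exact notMem_empty k hkR
    have := hmono T (S1 n) hTS
    have hle : f T ≤ max (f (S1 n)) (f (S2 n)) := this.trans (le_max_left _ _)
    nlinarith [mul_le_mul_of_nonneg_left hcoef hTnn]
  case pos =>
  -- τ + 1 is the first time an element of T is rejected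
  have hm0 : Nat.find hex ≠ 0 := by
    intro h0
    obtain ⟨k, hk, -, hkR⟩ := h0 ▸ Nat.find_spec hex
    exact hkR (hR10 ▸ mem_univ k)
  obtain ⟨τ, hmeq⟩ : ∃ τ, Nat.find hex = τ + 1 :=
    ⟨Nat.find hex - 1, (Nat.succ_pred_eq_of_ne_zero hm0).symm⟩
  have hGood : ∀ t ≤ τ, ∀ k ∈ T, k ∉ S1 t → k ∈ R1 t := by
    intro t htτ k hk hkS
    by_contra hkR
    exact Nat.find_min hex (by omega : t < Nat.find hex) ⟨k, hk, hkS, hkR⟩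
  -- exponential decay along the accepted prefix
  have hdecay : ∀ t ≤ τ, f T - f (S1 t) ≤ f T * Real.exp (-(∑ k ∈ S1 t, s k) / C) := by
    intro t
    induction t with
    | zero =>
      intro _
      rw [hS10, hempty]
      simp
    | succ u ih =>
      intro hu
      have huτ : u ≤ τ := by omega
      have ihu := ih huτ
      rcases (R1 u).eq_empty_or_nonempty with he | hne
      · rw [(hend1 u he).1]; exact ihu
      obtain ⟨x, hx, hmax, hR, hS⟩ := hstep1 u hne
      rw [hS]
      split
      case isFalse => exact ihu
      case isTrue hcond =>
        have hxS : x ∉ S1 u := fun hmem => h1.disjoint u x hmem hx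
        rw [Finset.sum_insert hxS]
        set B := ∑ k ∈ S1 u, s k with hB
        have hBnn : 0 ≤ B := Finset.sum_nonneg (fun i _ => (hs i).le)
        have hσC : s x ≤ C := by linarith
        have hfac : 0 ≤ 1 - s x / C := by
          rw [sub_nonneg, div_le_one hC]; exact hσC
        have hkey := gain_lower f s C hmono hsub hs T (S1 u) (R1 u) hT
          (hGood u huτ) x hmax
        set g := f (insert x (S1 u)) - f (S1 u) with hg
        have hgnn : 0 ≤ g := sub_nonneg.mpr (hmono _ _ (subset_insert _ _))
        have hgain : (f T - f (S1 u)) * (s x / C) ≤ g := by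
          have h' := mul_le_mul_of_nonneg_right hkey (div_pos (hs x) hC).le
          have heq : C * (g / s x) * (s x / C) = g := by
            field_simp [(hs x).ne', hC.ne']
          linarith
        have e1 : f T - f (insert x (S1 u)) ≤ (f T - f (S1 u)) * (1 - s x / C) := by
          have : f (insert x (S1 u)) = f (S1 u) + g := by rw [hg]; ring
          rw [this]; nlinarith
        have e2 : (f T - f (S1 u)) * (1 - s x / C)
            ≤ f T * Real.exp (-B / C) * (1 - s x / C) :=
          mul_le_mul_of_nonneg_right ihu hfac
        have e3 : (1 - s x / C) ≤ Real.exp (-(s x / C)) := by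
          have := Real.add_one_le_exp (-(s x / C))
          linarith
        have e4 : f T * Real.exp (-B / C) * (1 - s x / C)
            ≤ f T * Real.exp (-B / C) * Real.exp (-(s x / C)) :=
          mul_le_mul_of_nonneg_left e3 (by positivity)
        have e5 : f T * Real.exp (-B / C) * Real.exp (-(s x / C))
            = f T * Real.exp (-(s x + B) / C) := by
          rw [mul_assoc, ← Real.exp_add]
          congr 1
          ring
        linarith
  -- extract the rejected T-element at time τ
  obtain ⟨z, hzT, hzS, hzR⟩ := hmeq ▸ Nat.find_spec hex
  have hzRτ : z ∈ R1 τ := by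
    rcases Classical.em (z ∈ S1 τ) with hzs | hzs
    · exact absurd (h1.S_subset τ hzs) hzS
    · exact hGood τ le_rfl z hzT hzs
  obtain ⟨x, hx, hmax, hR, hS⟩ := hstep1 τ ⟨z, hzRτ⟩
  have hzx : z = x := by
    by_contra hne
    exact hzR (hR ▸ mem_erase.mpr ⟨hne, hzRτ⟩)
  subst hzx
  have hcond : ¬ ((∑ k ∈ S1 τ, s k) + s z ≤ C) := by
    intro hc
    rw [hS, if_pos hc] at hzS
    exact hzS (mem_insert_self _ _)
  push_neg at hcond
  set B := ∑ k ∈ S1 τ, s k with hB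
  have hzSτ : z ∉ S1 τ := fun hmem => h1.disjoint τ z hmem hzRτ
  set g := f (insert z (S1 τ)) - f (S1 τ) with hg
  have hgnn : 0 ≤ g := sub_nonneg.mpr (hmono _ _ (subset_insert _ _))
  have hkey := gain_lower f s C hmono hsub hs T (S1 τ) (R1 τ) hT (hGood τ le_rfl) z hmax
  have hgain : (f T - f (S1 τ)) * (s z / C) ≤ g := by
    have h' := mul_le_mul_of_nonneg_right hkey (div_pos (hs z) hC).le
    have heq : C * (g / s z) * (s z / C) = g := by
      field_simp [(hs z).ne', hC.ne']
    linarith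
  have hszC : s z ≤ C := by
    refine le_trans ?_ hT
    exact Finset.single_le_sum (fun i _ => (hs i).le) hzT
  have hfac : 0 ≤ 1 - s z / C := by
    rw [sub_nonneg, div_le_one hC]; exact hszC
  have hdτ := hdecay τ le_rfl
  have e1 : f T - f (S1 τ) - g ≤ (f T - f (S1 τ)) * (1 - s z / C) := by nlinarith
  have e2 : (f T - f (S1 τ)) * (1 - s z / C)
      ≤ f T * Real.exp (-B / C) * (1 - s z / C) :=
    mul_le_mul_of_nonneg_right hdτ hfac
  have e3 : (1 - s z / C) ≤ Real.exp (-(s z / C)) := by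
    have := Real.add_one_le_exp (-(s z / C))
    linarith
  have e4 : f T * Real.exp (-B / C) * (1 - s z / C)
      ≤ f T * Real.exp (-B / C) * Real.exp (-(s z / C)) :=
    mul_le_mul_of_nonneg_left e3 (by positivity)
  have e5 : f T * Real.exp (-B / C) * Real.exp (-(s z / C))
      = f T * Real.exp (-(B + s z) / C) := by
    rw [mul_assoc, ← Real.exp_add]; ring_nf
  have e6 : Real.exp (-(B + s z) / C) ≤ Real.exp (-1) := by
    apply Real.exp_le_exp.mpr
    rw [div_le_iff₀ hC]
    nlinarith
  have e7 : f T * Real.exp (-(B + s z) / C) ≤ f T * Real.exp (-1) :=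
    mul_le_mul_of_nonneg_left e6 hTnn
  -- so f(S1 τ) + g ≥ (1 - 1/e) f T
  have hmain : (1 - 1 / Real.exp 1) * f T ≤ f (S1 τ) + g := by
    have e8 : f T * Real.exp (-1) = f T * (1 / Real.exp 1) := by
      rw [Real.exp_neg, one_div]
    linarith
  -- g ≤ f {z}
  have hgz : g ≤ f {z} := by
    have h' := hsub ∅ (S1 τ) (empty_subset _) z hzSτ
    simp [hempty] at h'
    rw [hg]
    linarith
  -- f (S1 τ) ≤ f (S1 n)
  have hτn : τ ≤ n := by
    by_contra hlt
    push_neg at hlt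
    have : R1 τ ⊆ R1 n := h1.R_anti hlt.le
    have := this hzRτ
    rw [h1.R_final] at this
    exact absurd this (notMem_empty z)
  have hS1 : f (S1 τ) ≤ f (S1 n) := hmono _ _ (h1.S_mono hτn)
  -- f {z} ≤ f (S2 n)
  have hS2 : f {z} ≤ f (S2 n) := uniform_singleton f s C hempty hmono S2 R2 hstep2 h2 z hszC
  have hM1 : f (S1 n) ≤ max (f (S1 n)) (f (S2 n)) := le_max_left _ _
  have hM2 : f (S2 n) ≤ max (f (S1 n)) (f (S2 n)) := le_max_right _ _
  linarith
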